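/- One-step price monotonicity of saferAd-CP: for any mempool state st and any arriving transaction ta ∉ st, the sum of transaction prices does not decrease across a single admission step, i.e., Σ_{tx ∈ adTx(st, ta)} tx.price ≥ Σ_{tx ∈ st} tx.price. -/

import Mathlib

/-- A transaction: sender, nonce (naturals) and a nonnegative rational price. -/
structure Tx where
  sender : ℕ
  nonce : ℕ
  price : ℚ≥0
deriving DecidableEq

instance : DecidableRel ((· ≤ ·) : ℚ≥0 → ℚ≥0 → Prop) :=
  fun a b => decidable_of_iff ((a : ℚ) ≤ (b : ℚ)) (by exact_mod_cast Iff.rfl)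

/-- `tx₁` is an ancestor of `tx₂`. -/
def Ancestor (tx₁ tx₂ : Tx) : Prop :=
  tx₁.sender = tx₂.sender ∧ tx₁.nonce < tx₂.nonce

instance (tx₁ tx₂ : Tx) : Decidable (Ancestor tx₁ tx₂) :=
  decidable_of_iff (tx₁.sender = tx₂.sender ∧ tx₁.nonce < tx₂.nonce) Iff.rfl

/-- `te` is a childless transaction in the mempool state `st`. -/
def Childless (te : Tx) (st : Finset Tx) : Prop :=
  te ∈ st ∧ ∀ tx ∈ st, ¬ Ancestor te tx

/-- `pick` selects, from any nonempty mempool state, a childless transaction of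
minimum price among the childless transactions of the state. -/
def ValidPick (pick : Finset Tx → Tx) : Prop :=
  ∀ st : Finset Tx, st.Nonempty →
    Childless (pick st) st ∧ ∀ tx : Tx, Childless tx st → (pick st).price ≤ tx.price

/-- The saferAd-CP admission step with capacity `m`, eviction candidate chosen by `pick`. -/
def adTx (m : ℕ) (pick : Finset Tx → Tx) (st : Finset Tx) (ta : Tx) : Finset Tx :=
  if st.card < m then insert ta st
  else if ta.price ≤ (pick st).price then st
  else insert ta (st.erase (pick st))

/-- The state after processing the list of arriving transactions `ops` from `st₀`. -/
def run (m : ℕ) (pick : Finset Tx → Tx) (st₀ : Finset Tx) (ops : List Tx) : Finset Tx :=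
  ops.foldl (adTx m pick) st₀

/-- One-step price monotonicity of saferAd-CP: the sum of
transaction prices does not decrease across a single admission step. -/
theorem adTx_price_mono (m : ℕ) (pick : Finset Tx → Tx) (hpick : ValidPick pick)
    (st : Finset Tx) (ta : Tx) (hta : ta ∉ st) :
    ∑ tx ∈ st, tx.price ≤ ∑ tx ∈ adTx m pick st ta, tx.price := by
  unfold adTx
  split_ifs with h1 h2
  · rw [Finset.sum_insert hta]; exact le_add_self
  · exact le_refl _
  · by_cases he : pick st ∈ st
    · rw [Finset.sum_insert (fun hmem => hta (Finset.mem_of_mem_erase hmem)),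
        ← Finset.sum_erase_add st _ he]
      have := le_of_lt (lt_of_not_ge h2)
      rw [add_comm]
      exact add_le_add_left this _
    · rw [Finset.erase_eq_of_notMem he, Finset.sum_insert hta]
      exact le_add_self
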